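/- Let d and m be positive integers, let C > 0, σ > 0, L > 0 and α ∈ (0, 1], and let c : ℝ^d × ℝ^d → ℝ be a symmetric kernel that is positive semidefinite (for every finite tuple of points z_1, …, z_k ∈ ℝ^d the k×k matrix with entries c(z_i, z_j) is positive semidefinite), satisfies c(x, x) ≤ C for all x, and satisfies |c(x, y) − c(x, z)| ≤ L·‖y − z‖₂^α for all x, y, z. Fix points z_1, …, z_m ∈ ℝ^d, let C_m be the m×m matrix with entries (C_m)_{ij} = c(z_i, z_j), and for x ∈ ℝ^d let c_m(x) ∈ ℝ^m be the vector with entries c(x, z_i). Define the posterior predictive variance σ_m²(x) := c(x, x) − c_m(x)ᵀ·(C_m + σ²·I)^{−1}·c_m(x). Then for all x, y ∈ ℝ^d, |σ_m²(x) − σ_m²(y)| ≤ 2·√(2·C·L)·‖x − y‖₂^{α/2}. -/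

import Mathlib

open Matrix

lemma quadAux (X Y V : ℝ) (hX : 0 ≤ X) (hY : 0 ≤ Y)
    (H : ∀ a b : ℝ, 0 ≤ a ^ 2 * X + 2 * (a * b) * V + b ^ 2 * Y) :
    V ≤ Real.sqrt X * Real.sqrt Y := by
  rcases eq_or_lt_of_le (mul_nonneg (Real.sqrt_nonneg X) (Real.sqrt_nonneg Y)) with h0 | h0
  · rw [← h0]
    by_contra hV
    push_neg at hV
    rcases mul_eq_zero.mp h0.symm with hx0 | hy0
    · have hX0 : X = 0 := by
        have := Real.sqrt_eq_zero hX |>.mp hx0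
        exact this
      have h1 := H (-(Y + 1) / (2 * V)) 1
      rw [hX0] at h1
      have hVne : V ≠ 0 := ne_of_gt hV
      have : 2 * (-(Y + 1) / (2 * V) * 1) * V = -(Y + 1) := by field_simp
      nlinarith [h1]
    · have hY0 : Y = 0 := by
        have := Real.sqrt_eq_zero hY |>.mp hy0
        exact this
      have h1 := H 1 (-(X + 1) / (2 * V))
      rw [hY0] at h1
      have hVne : V ≠ 0 := ne_of_gt hV
      have : 2 * (1 * (-(X + 1) / (2 * V))) * V = -(X + 1) := by field_simp
      nlinarith [h1]
  · have hXY := H (Real.sqrt Y) (-(Real.sqrt X))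
    have e1 : Real.sqrt X ^ 2 = X := Real.sq_sqrt hX
    have e2 : Real.sqrt Y ^ 2 = Y := Real.sq_sqrt hY
    nlinarith [h0, hXY, e1, e2]

lemma gramKey {d m : ℕ} {σ : ℝ}
    (c : EuclideanSpace ℝ (Fin d) → EuclideanSpace ℝ (Fin d) → ℝ)
    (hsymm : ∀ x y, c x y = c y x)
    (hpsd : ∀ (k : ℕ) (z : Fin k → EuclideanSpace ℝ (Fin d)),
      (Matrix.of fun i j => c (z i) (z j)).PosSemidef)
    (z : Fin m → EuclideanSpace ℝ (Fin d)) (x y : EuclideanSpace ℝ (Fin d)) (a b : ℝ)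
    (B : Fin m → ℝ)
    (hB : ∀ i, (∑ j, c (z i) (z j) * B j) + σ ^ 2 * B i = a * c x (z i) + b * c y (z i)) :
    (∑ i, B i * (a * c x (z i) + b * c y (z i)))
      ≤ a ^ 2 * c x x + 2 * (a * b) * c x y + b ^ 2 * c y y := by
  classical
  set ζ : Fin (m + 2) → EuclideanSpace ℝ (Fin d) := Fin.snoc (Fin.snoc z x) y with hζ
  set v : Fin (m + 2) → ℝ := Fin.snoc (Fin.snoc (fun i => -B i) a) b with hv
  have h0 : 0 ≤ v ⬝ᵥ (Matrix.of fun i j => c (ζ i) (ζ j)) *ᵥ v := by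
    have := (hpsd (m + 2) ζ).dotProduct_mulVec_nonneg v
    simpa using this
  have inner : ∀ p, (∑ j : Fin (m + 2), c p (ζ j) * v j)
      = -(∑ j, c p (z j) * B j) + c p x * a + c p y * b := by
    intro p
    rw [Fin.sum_univ_castSucc, Fin.sum_univ_castSucc]
    simp only [hζ, hv, Fin.snoc_castSucc, Fin.snoc_last, mul_neg]
    rw [Finset.sum_neg_distrib]
  have hvg : v ⬝ᵥ (Matrix.of fun i j => c (ζ i) (ζ j)) *ᵥ v
      = ∑ i, v i * (∑ j, c (ζ i) (ζ j) * v j) := by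
    simp [dotProduct, Matrix.mulVec, Matrix.of_apply]
  rw [hvg, Fin.sum_univ_castSucc, Fin.sum_univ_castSucc] at h0
  simp only [hζ, hv, Fin.snoc_castSucc, Fin.snoc_last] at h0
  simp only [hζ, hv] at inner
  simp only [inner] at h0
  have hin : ∀ i, (-B i) * (-(∑ j, c (z i) (z j) * B j) + c (z i) x * a + c (z i) y * b)
      = -(σ ^ 2 * (B i * B i)) := by
    intro i
    have h1 := hB i
    rw [hsymm (z i) x, hsymm (z i) y]
    rw [show (∑ j, c (z i) (z j) * B j) = a * c x (z i) + b * c y (z i) - σ ^ 2 * B i from by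
      linarith]
    ring
  simp only [hin] at h0
  have hneg : (∑ i, -(σ ^ 2 * (B i * B i))) = -(σ ^ 2 * ∑ i, B i * B i) := by
    rw [Finset.mul_sum, Finset.sum_neg_distrib]
  rw [hneg] at h0
  have hBB : 0 ≤ ∑ i, B i * B i := Finset.sum_nonneg fun i _ => mul_self_nonneg _
  have hgoal : (∑ i, B i * (a * c x (z i) + b * c y (z i)))
      = a * (∑ i, c x (z i) * B i) + b * (∑ i, c y (z i) * B i) := by
    rw [Finset.mul_sum, Finset.mul_sum, ← Finset.sum_add_distrib]
    exact Finset.sum_congr rfl fun i _ => by ring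
  rw [hgoal]
  rw [hsymm y x] at h0
  nlinarith [h0, hBB, sq_nonneg σ, mul_nonneg (sq_nonneg σ) hBB]

/-- The Gaussian process posterior predictive variance at `x`, given observation
points `z 0, …, z (m-1)`, kernel `c` and noise standard deviation `σ`. -/
noncomputable def postVar {E : Type*} (m : ℕ) (σ : ℝ) (c : E → E → ℝ)
    (z : Fin m → E) (x : E) : ℝ :=
  c x x -
    (fun i => c x (z i)) ⬝ᵥ
      (((Matrix.of fun i j => c (z i) (z j)) + σ ^ 2 • (1 : Matrix (Fin m) (Fin m) ℝ))⁻¹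
        *ᵥ fun i => c x (z i))

theorem stmt_11 (d m : ℕ) (hd : 0 < d) (hm : 0 < m)
    (C σ L α : ℝ) (hC : 0 < C) (hσ : 0 < σ) (hL : 0 < L) (hα : α ∈ Set.Ioc (0 : ℝ) 1)
    (c : EuclideanSpace ℝ (Fin d) → EuclideanSpace ℝ (Fin d) → ℝ)
    (hsymm : ∀ x y, c x y = c y x)
    (hpsd : ∀ (k : ℕ) (z : Fin k → EuclideanSpace ℝ (Fin d)),
      (Matrix.of fun i j => c (z i) (z j)).PosSemidef)
    (hbd : ∀ x, c x x ≤ C)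
    (hhol : ∀ x y z : EuclideanSpace ℝ (Fin d), |c x y - c x z| ≤ L * ‖y - z‖ ^ α)
    (z : Fin m → EuclideanSpace ℝ (Fin d)) :
    ∀ x y : EuclideanSpace ℝ (Fin d),
      |postVar m σ c z x - postVar m σ c z y| ≤
        2 * Real.sqrt (2 * C * L) * ‖x - y‖ ^ (α / 2) := by
  intro x y
  classical
  obtain ⟨hα0, hα1⟩ := hα
  set A : Matrix (Fin m) (Fin m) ℝ :=
    (Matrix.of fun i j => c (z i) (z j)) + σ ^ 2 • 1 with hAdef
  have hId : (σ ^ 2 • (1 : Matrix (Fin m) (Fin m) ℝ)) = Matrix.diagonal fun _ => σ ^ 2 := by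
    ext i j
    by_cases h : i = j <;> simp [Matrix.one_apply, h]
  have hApd : A.PosDef := by
    rw [hAdef, hId, add_comm]
    exact (Matrix.PosDef.diagonal fun _ => by positivity).add_posSemidef (hpsd m z)
  have hAinv : A⁻¹.PosDef := hApd.inv
  have hdet : IsUnit A.det := (Matrix.isUnit_iff_isUnit_det A).mp hApd.isUnit
  set cm : EuclideanSpace ℝ (Fin d) → (Fin m → ℝ) := fun p i => c p (z i) with hcm
  set q : EuclideanSpace ℝ (Fin d) → EuclideanSpace ℝ (Fin d) → ℝ :=
    fun p r => cm p ⬝ᵥ (A⁻¹ *ᵥ cm r) with hq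
  have hpost : ∀ p, postVar m σ c z p = c p p - q p p := fun p => rfl
  -- the key inequality
  have key : ∀ (x y : EuclideanSpace ℝ (Fin d)) (a b : ℝ),
      a ^ 2 * q x x + (a * b) * (q x y + q y x) + b ^ 2 * q y y
        ≤ a ^ 2 * c x x + 2 * (a * b) * c x y + b ^ 2 * c y y := by
    intro x y a b
    set w : Fin m → ℝ := fun i => a * c x (z i) + b * c y (z i) with hw
    set B : Fin m → ℝ := A⁻¹ *ᵥ w with hBdef
    have hAB : A *ᵥ B = w := by
      rw [hBdef, Matrix.mulVec_mulVec, Matrix.mul_nonsing_inv _ hdet, Matrix.one_mulVec]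
    have hB : ∀ i, (∑ j, c (z i) (z j) * B j) + σ ^ 2 * B i
        = a * c x (z i) + b * c y (z i) := by
      intro i
      have h1 := congrFun hAB i
      rw [hAdef] at h1
      rw [Matrix.add_mulVec, Matrix.smul_mulVec, Matrix.one_mulVec] at h1
      simpa [Matrix.mulVec, dotProduct, hw] using h1
    have hkey := gramKey (σ := σ) c hsymm hpsd z x y a b B hB
    have hBw : (∑ i, B i * (a * c x (z i) + b * c y (z i)))
        = a ^ 2 * q x x + (a * b) * (q x y + q y x) + b ^ 2 * q y y := by
      have hwsum : w = a • cm x + b • cm y := by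
        funext i; simp [hw, hcm]
      have : (∑ i, B i * (a * c x (z i) + b * c y (z i))) = w ⬝ᵥ B := by
        rw [dotProduct_comm]
        simp [dotProduct, hw]
      rw [this, hBdef, hwsum]
      simp only [Matrix.mulVec_add, Matrix.mulVec_smul, dotProduct_add,
        add_dotProduct, dotProduct_smul, smul_dotProduct]
      rw [hq]
      have c1 : cm x ⬝ᵥ (A⁻¹ *ᵥ cm y) = (A⁻¹ *ᵥ cm y) ⬝ᵥ cm x := dotProduct_comm _ _
      have c2 : cm y ⬝ᵥ (A⁻¹ *ᵥ cm x) = (A⁻¹ *ᵥ cm x) ⬝ᵥ cm y := dotProduct_comm _ _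
      have c3 : cm x ⬝ᵥ (A⁻¹ *ᵥ cm x) = (A⁻¹ *ᵥ cm x) ⬝ᵥ cm x := dotProduct_comm _ _
      have c4 : cm y ⬝ᵥ (A⁻¹ *ᵥ cm y) = (A⁻¹ *ᵥ cm y) ⬝ᵥ cm y := dotProduct_comm _ _
      simp only [c1, c2, c3, c4, smul_eq_mul]
      ring
    rw [hBw] at hkey
    exact hkey
  -- nonnegativity facts
  have hq0 : ∀ p, 0 ≤ q p p := by
    intro p
    have := hAinv.posSemidef.dotProduct_mulVec_nonneg (cm p)
    simpa [hq] using this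
  have hAM : q x y + q y x ≤ q x x + q y y := by
    have := hAinv.posSemidef.dotProduct_mulVec_nonneg (cm x - cm y)
    simp only [star_trivial, Matrix.mulVec_sub, dotProduct_sub,
      sub_dotProduct] at this
    simp only [hq]
    linarith
  have hqc : ∀ p, q p p ≤ c p p := by
    intro p
    have := key p p 1 0
    simpa using this
  obtain ⟨X, hX⟩ : ∃ X, X = c x x - q x x := ⟨_, rfl⟩
  obtain ⟨Y, hY⟩ : ∃ Y, Y = c y y - q y y := ⟨_, rfl⟩
  have hX0 : 0 ≤ X := by have := hqc x; rw [hX]; linarith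
  have hY0 : 0 ≤ Y := by have := hqc y; rw [hY]; linarith
  obtain ⟨V, hV⟩ : ∃ V, V = c x y - (q x y + q y x) / 2 := ⟨_, rfl⟩
  have hquad : ∀ a b : ℝ, 0 ≤ a ^ 2 * X + 2 * (a * b) * V + b ^ 2 * Y := by
    intro a b
    have := key x y a b
    rw [hX, hY, hV]
    nlinarith [this]
  have hVs' : V ≤ Real.sqrt X * Real.sqrt Y := quadAux X Y V hX0 hY0 hquad
  -- Hölder bound
  have hD : c x x - 2 * c x y + c y y ≤ 2 * (L * ‖x - y‖ ^ α) := by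
    have h1 := (abs_le.mp (hhol x x y)).2
    have h2 := (abs_le.mp (hhol y y x)).2
    rw [norm_sub_rev] at h2
    rw [hsymm y x] at h2
    linarith
  obtain ⟨sx, hsx⟩ : ∃ s, s = Real.sqrt X := ⟨_, rfl⟩
  obtain ⟨sy, hsy⟩ : ∃ s, s = Real.sqrt Y := ⟨_, rfl⟩
  have hsx2 : sx ^ 2 = X := by rw [hsx]; exact Real.sq_sqrt hX0
  have hsy2 : sy ^ 2 = Y := by rw [hsy]; exact Real.sq_sqrt hY0
  have hVs : V ≤ sx * sy := by rw [hsx, hsy]; exact hVs'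
  have hsxC : sx ≤ Real.sqrt C := by
    rw [hsx]; apply Real.sqrt_le_sqrt
    have h1 := hq0 x; have h2 := hbd x
    rw [hX]; linarith
  have hsyC : sy ≤ Real.sqrt C := by
    rw [hsy]; apply Real.sqrt_le_sqrt
    have h1 := hq0 y; have h2 := hbd y
    rw [hY]; linarith
  have hdiff2 : (sx - sy) ^ 2 ≤ 2 * (L * ‖x - y‖ ^ α) := by
    have hexp : (sx - sy) ^ 2 = X + Y - 2 * (sx * sy) := by
      rw [← hsx2, ← hsy2]; ring
    linarith [hVs, hAM, hD, hexp, hV, hX, hY]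
  have hnn : (0:ℝ) ≤ 2 * (L * ‖x - y‖ ^ α) := by
    have : (0:ℝ) ≤ ‖x - y‖ ^ α := Real.rpow_nonneg (norm_nonneg _) _
    nlinarith
  have hdiff : |sx - sy| ≤ Real.sqrt (2 * L) * ‖x - y‖ ^ (α / 2) := by
    have h1 : |sx - sy| = Real.sqrt ((sx - sy) ^ 2) := (Real.sqrt_sq_eq_abs _).symm
    rw [h1]
    have h2 := Real.sqrt_le_sqrt hdiff2
    calc Real.sqrt ((sx - sy) ^ 2) ≤ Real.sqrt (2 * (L * ‖x - y‖ ^ α)) := h2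
      _ = Real.sqrt (2 * L) * ‖x - y‖ ^ (α / 2) := by
          rw [show 2 * (L * ‖x - y‖ ^ α) = (2 * L) * ‖x - y‖ ^ α by ring,
            Real.sqrt_mul (by positivity)]
          congr 1
          rw [Real.sqrt_eq_rpow, ← Real.rpow_mul (norm_nonneg _),
            show α * (1/2) = α / 2 by ring]
  have hsum0 : 0 ≤ sx + sy := by
    have h1 := Real.sqrt_nonneg X
    have h2 := Real.sqrt_nonneg Y
    rw [hsx, hsy]; linarith
  have habs : |postVar m σ c z x - postVar m σ c z y| = |sx - sy| * (sx + sy) := by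
    rw [hpost x, hpost y, ← hX, ← hY, ← hsx2, ← hsy2,
      show sx ^ 2 - sy ^ 2 = (sx - sy) * (sx + sy) by ring, abs_mul, abs_of_nonneg hsum0]
  rw [habs]
  have hsum : sx + sy ≤ 2 * Real.sqrt C := by linarith
  have h1 : |sx - sy| * (sx + sy)
      ≤ (Real.sqrt (2 * L) * ‖x - y‖ ^ (α / 2)) * (2 * Real.sqrt C) :=
    mul_le_mul hdiff hsum hsum0 (by positivity)
  calc |sx - sy| * (sx + sy)
      ≤ (Real.sqrt (2 * L) * ‖x - y‖ ^ (α / 2)) * (2 * Real.sqrt C) := h1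
    _ = 2 * Real.sqrt (2 * C * L) * ‖x - y‖ ^ (α / 2) := by
        rw [show 2 * C * L = (2 * L) * C by ring,
          Real.sqrt_mul (by positivity : (0:ℝ) ≤ 2 * L) C]
        ring
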